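/- The group presented by ⟨a₁, a₂, b₁, b₂, c₁, c₂, c₃, d₁, d₂ | a₂b₁b₂a₂⁻¹a₁⁻¹b₂⁻¹c₁c₂c₃, b₁c₁d₁⁻¹, d₁c₂d₂⁻¹, d₂c₃a₁⁻¹⟩ is isomorphic to ℤ² * F₄. -/

import Mathlib

namespace Stmt3Aux

def pairHom {H : Type*} [Group H] (t z : H) (h : Commute t z) :
    Multiplicative (ℤ × ℤ) →* H :=
  MonoidHom.mk' (fun p => t ^ (Multiplicative.toAdd p).1 * z ^ (Multiplicative.toAdd p).2)
    (by
      intro a b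
      have := (h.zpow_zpow (Multiplicative.toAdd b).1 (Multiplicative.toAdd a).2).eq
      simp only [toAdd_mul, Prod.fst_add, Prod.snd_add, zpow_add]
      rw [mul_assoc, ← mul_assoc (t ^ (Multiplicative.toAdd b).1), this,
        mul_assoc, ← mul_assoc])

@[simp] lemma pairHom_apply {H : Type*} [Group H] (t z : H) (h : Commute t z) (p : ℤ × ℤ) :
    pairHom t z h (Multiplicative.ofAdd p) = t ^ p.1 * z ^ p.2 := rfl

lemma mhom_ext {H : Type*} [Group H] {f g : Multiplicative (ℤ × ℤ) →* H}
    (h1 : f (Multiplicative.ofAdd (1, 0)) = g (Multiplicative.ofAdd (1, 0)))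
    (h2 : f (Multiplicative.ofAdd (0, 1)) = g (Multiplicative.ofAdd (0, 1))) : f = g := by
  refine MonoidHom.ext (fun p => ?_)
  have hp : p = Multiplicative.ofAdd ((Multiplicative.toAdd p).1 • ((1 : ℤ), (0 : ℤ)))
      * Multiplicative.ofAdd ((Multiplicative.toAdd p).2 • ((0 : ℤ), (1 : ℤ))) := by
    rw [← ofAdd_add]
    simp [Prod.ext_iff]
  rw [hp, ofAdd_zsmul, ofAdd_zsmul, map_mul, map_mul, map_zpow, map_zpow, h1, h2, map_zpow,
    map_zpow]

abbrev G := Monoid.Coprod (Multiplicative (ℤ × ℤ)) (FreeGroup (Fin 4))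

def rels : Set (FreeGroup (Fin 9)) :=
  {FreeGroup.of 1 * FreeGroup.of 2 * FreeGroup.of 3 * (FreeGroup.of 1)⁻¹ *
      (FreeGroup.of 0)⁻¹ * (FreeGroup.of 3)⁻¹ * FreeGroup.of 4 * FreeGroup.of 5 *
      FreeGroup.of 6,
    FreeGroup.of 2 * FreeGroup.of 4 * (FreeGroup.of 7)⁻¹,
    FreeGroup.of 7 * FreeGroup.of 5 * (FreeGroup.of 8)⁻¹,
    FreeGroup.of 8 * FreeGroup.of 6 * (FreeGroup.of 0)⁻¹}

abbrev P := PresentedGroup rels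

def T : G := Monoid.Coprod.inl (Multiplicative.ofAdd (1, 0))
def Z : G := Monoid.Coprod.inl (Multiplicative.ofAdd (0, 1))
def B : G := Monoid.Coprod.inr (FreeGroup.of 0)
def C1 : G := Monoid.Coprod.inr (FreeGroup.of 1)
def C2 : G := Monoid.Coprod.inr (FreeGroup.of 2)
def X : G := Monoid.Coprod.inr (FreeGroup.of 3)

lemma commTZ : Commute T Z := by
  unfold T Z
  rw [Commute, SemiconjBy, ← MonoidHom.map_mul Monoid.Coprod.inl,
    ← MonoidHom.map_mul Monoid.Coprod.inl, mul_comm]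

def fgen : Fin 9 → G :=
  ![Z * B⁻¹ * X, X⁻¹ * B * T, Z * B⁻¹, B, C1, C2, C2⁻¹ * C1⁻¹ * X,
    Z * B⁻¹ * C1, Z * B⁻¹ * C1 * C2]

@[simp] lemma fgen0 : fgen 0 = Z * B⁻¹ * X := rfl
@[simp] lemma fgen1 : fgen 1 = X⁻¹ * B * T := rfl
@[simp] lemma fgen2 : fgen 2 = Z * B⁻¹ := rfl
@[simp] lemma fgen3 : fgen 3 = B := rfl
@[simp] lemma fgen4 : fgen 4 = C1 := rfl
@[simp] lemma fgen5 : fgen 5 = C2 := rfl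
@[simp] lemma fgen6 : fgen 6 = C2⁻¹ * C1⁻¹ * X := rfl
@[simp] lemma fgen7 : fgen 7 = Z * B⁻¹ * C1 := rfl
@[simp] lemma fgen8 : fgen 8 = Z * B⁻¹ * C1 * C2 := rfl

lemma hfgen : ∀ r ∈ rels, FreeGroup.lift fgen r = 1 := by
  intro r hr
  have hc := commTZ.eq
  rcases hr with h | h | h | h <;> subst h <;>
    simp only [map_mul, map_inv, FreeGroup.lift_apply_of, fgen0, fgen1, fgen2, fgen3, fgen4,
      fgen5, fgen6, fgen7, fgen8]
  · have e : X⁻¹ * B * T * (Z * B⁻¹) * B * (X⁻¹ * B * T)⁻¹ * (Z * B⁻¹ * X)⁻¹ * B⁻¹ *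
        C1 * C2 * (C2⁻¹ * C1⁻¹ * X) = X⁻¹ * B * (T * Z) * (Z * T)⁻¹ * B⁻¹ * X := by
      group
    rw [e, hc]
    group
  · group
  · group
  · group

def phi : P →* G := PresentedGroup.toGroup hfgen

@[simp] lemma phi_of (i : Fin 9) : phi (PresentedGroup.of i) = fgen i :=
  PresentedGroup.toGroup.of hfgen

-- generators of P
def a1 : P := PresentedGroup.of 0
def a2 : P := PresentedGroup.of 1
def b1 : P := PresentedGroup.of 2
def b2 : P := PresentedGroup.of 3
def c1 : P := PresentedGroup.of 4
def c2 : P := PresentedGroup.of 5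
def c3 : P := PresentedGroup.of 6
def d1 : P := PresentedGroup.of 7
def d2 : P := PresentedGroup.of 8

lemma rel_one {r : FreeGroup (Fin 9)} (hr : r ∈ rels) : PresentedGroup.mk rels r = 1 := by
  have : r ∈ Subgroup.normalClosure rels := Subgroup.subset_normalClosure hr
  exact (QuotientGroup.eq_one_iff r).mpr this

lemma hr1 : a2 * b1 * b2 * a2⁻¹ * a1⁻¹ * b2⁻¹ * c1 * c2 * c3 = 1 := by
  have := rel_one (show _ ∈ rels from Or.inl rfl)
  simp only [map_mul, map_inv] at this
  exact this

lemma hr2 : b1 * c1 = d1 := by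
  have := rel_one (show _ ∈ rels from Or.inr (Or.inl rfl))
  simp only [map_mul, map_inv] at this
  exact mul_inv_eq_one.mp this

lemma hr3 : d1 * c2 = d2 := by
  have := rel_one (show _ ∈ rels from Or.inr (Or.inr (Or.inl rfl)))
  simp only [map_mul, map_inv] at this
  exact mul_inv_eq_one.mp this

lemma hr4 : d2 * c3 = a1 := by
  have := rel_one (show _ ∈ rels from Or.inr (Or.inr (Or.inr rfl)))
  simp only [map_mul, map_inv] at this
  exact mul_inv_eq_one.mp this

lemma ha1 : a1 = b1 * c1 * c2 * c3 := by
  rw [hr2, hr3, hr4]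

lemma key : a2 * (b1 * b2) * a2⁻¹ = (c1 * c2 * c3)⁻¹ * b2 * a1 := by
  rw [← mul_inv_eq_one]
  have e : a2 * (b1 * b2) * a2⁻¹ * ((c1 * c2 * c3)⁻¹ * b2 * a1)⁻¹ =
      a2 * b1 * b2 * a2⁻¹ * a1⁻¹ * b2⁻¹ * c1 * c2 * c3 := by group
  rw [e, hr1]

def th : P := b2⁻¹ * (c1 * c2 * c3) * a2
def zh : P := b1 * b2

lemma comm_th_zh : Commute th zh := by
  rw [Commute, SemiconjBy]
  unfold th zh
  calc b2⁻¹ * (c1 * c2 * c3) * a2 * (b1 * b2)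
      = b2⁻¹ * (c1 * c2 * c3) * (a2 * (b1 * b2) * a2⁻¹) * a2 := by group
    _ = b2⁻¹ * (c1 * c2 * c3) * ((c1 * c2 * c3)⁻¹ * b2 * a1) * a2 := by rw [key]
    _ = a1 * a2 := by group
    _ = b1 * b2 * (b2⁻¹ * (c1 * c2 * c3) * a2) := by rw [ha1]; group

def psi : G →* P :=
  Monoid.Coprod.lift (pairHom th zh comm_th_zh)
    (FreeGroup.lift ![b2, c1, c2, c1 * c2 * c3])

@[simp] lemma psi_T : psi T = th := by
  rw [psi, T, Monoid.Coprod.lift_apply_inl, pairHom_apply]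
  simp

@[simp] lemma psi_Z : psi Z = zh := by
  rw [psi, Z, Monoid.Coprod.lift_apply_inl, pairHom_apply]
  simp

@[simp] lemma psi_B : psi B = b2 := by
  rw [psi, B, Monoid.Coprod.lift_apply_inr, FreeGroup.lift_apply_of]
  rfl

@[simp] lemma psi_C1 : psi C1 = c1 := by
  rw [psi, C1, Monoid.Coprod.lift_apply_inr, FreeGroup.lift_apply_of]
  rfl

@[simp] lemma psi_C2 : psi C2 = c2 := by
  rw [psi, C2, Monoid.Coprod.lift_apply_inr, FreeGroup.lift_apply_of]
  rfl

@[simp] lemma psi_X : psi X = c1 * c2 * c3 := by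
  rw [psi, X, Monoid.Coprod.lift_apply_inr, FreeGroup.lift_apply_of]
  rfl

lemma left : psi.comp phi = MonoidHom.id P := by
  apply PresentedGroup.ext
  intro i
  fin_cases i
  · show psi (phi a1) = a1
    rw [show phi a1 = Z * B⁻¹ * X from phi_of 0]
    simp only [map_mul, map_inv, psi_Z, psi_B, psi_X]
    rw [zh, ha1]; group
  · show psi (phi a2) = a2
    rw [show phi a2 = X⁻¹ * B * T from phi_of 1]
    simp only [map_mul, map_inv, psi_T, psi_B, psi_X]
    rw [th]; group
  · show psi (phi b1) = b1
    rw [show phi b1 = Z * B⁻¹ from phi_of 2]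
    simp only [map_mul, map_inv, psi_Z, psi_B]
    rw [zh]; group
  · show psi (phi b2) = b2
    rw [show phi b2 = B from phi_of 3, psi_B]
  · show psi (phi c1) = c1
    rw [show phi c1 = C1 from phi_of 4, psi_C1]
  · show psi (phi c2) = c2
    rw [show phi c2 = C2 from phi_of 5, psi_C2]
  · show psi (phi c3) = c3
    rw [show phi c3 = C2⁻¹ * C1⁻¹ * X from phi_of 6]
    simp only [map_mul, map_inv, psi_C1, psi_C2, psi_X]
    group
  · show psi (phi d1) = d1
    rw [show phi d1 = Z * B⁻¹ * C1 from phi_of 7]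
    simp only [map_mul, map_inv, psi_Z, psi_B, psi_C1]
    rw [zh, ← hr2]; group
  · show psi (phi d2) = d2
    rw [show phi d2 = Z * B⁻¹ * C1 * C2 from phi_of 8]
    simp only [map_mul, map_inv, psi_Z, psi_B, psi_C1, psi_C2]
    rw [zh, ← hr3, ← hr2]; group

lemma right : phi.comp psi = MonoidHom.id G := by
  apply Monoid.Coprod.hom_ext
  · apply mhom_ext
    · show phi (psi T) = T
      rw [psi_T, th]
      simp only [map_mul, map_inv]
      rw [show phi b2 = B from phi_of 3, show phi c1 = C1 from phi_of 4,
        show phi c2 = C2 from phi_of 5, show phi c3 = C2⁻¹ * C1⁻¹ * X from phi_of 6,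
        show phi a2 = X⁻¹ * B * T from phi_of 1]
      group
    · show phi (psi Z) = Z
      rw [psi_Z, zh]
      simp only [map_mul]
      rw [show phi b1 = Z * B⁻¹ from phi_of 2, show phi b2 = B from phi_of 3]
      group
  · apply FreeGroup.ext_hom
    intro j
    fin_cases j
    · show phi (psi B) = B
      rw [psi_B]; exact phi_of 3
    · show phi (psi C1) = C1
      rw [psi_C1]; exact phi_of 4
    · show phi (psi C2) = C2
      rw [psi_C2]; exact phi_of 5
    · show phi (psi X) = X
      rw [psi_X]
      simp only [map_mul]
      rw [show phi c1 = C1 from phi_of 4, show phi c2 = C2 from phi_of 5,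
        show phi c3 = C2⁻¹ * C1⁻¹ * X from phi_of 6]
      group

noncomputable def theEquiv : P ≃* G :=
  { toFun := phi, invFun := psi,
    left_inv := fun x => DFunLike.congr_fun left x,
    right_inv := fun y => DFunLike.congr_fun right y,
    map_mul' := map_mul phi }

end Stmt3Aux

/-- ⟨a₁, a₂, b₁, b₂, c₁, c₂, c₃, d₁, d₂ |
      a₂b₁b₂a₂⁻¹a₁⁻¹b₂⁻¹c₁c₂c₃, b₁c₁d₁⁻¹, d₁c₂d₂⁻¹, d₂c₃a₁⁻¹⟩ ≅ ℤ² * F₄.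
Generators: 0 ↦ a₁, 1 ↦ a₂, 2 ↦ b₁, 3 ↦ b₂, 4 ↦ c₁, 5 ↦ c₂, 6 ↦ c₃, 7 ↦ d₁, 8 ↦ d₂. -/
theorem stmt_3 :
    Nonempty
      (PresentedGroup
          ({FreeGroup.of 1 * FreeGroup.of 2 * FreeGroup.of 3 * (FreeGroup.of 1)⁻¹ *
              (FreeGroup.of 0)⁻¹ * (FreeGroup.of 3)⁻¹ * FreeGroup.of 4 * FreeGroup.of 5 *
              FreeGroup.of 6,
            FreeGroup.of 2 * FreeGroup.of 4 * (FreeGroup.of 7)⁻¹,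
            FreeGroup.of 7 * FreeGroup.of 5 * (FreeGroup.of 8)⁻¹,
            FreeGroup.of 8 * FreeGroup.of 6 * (FreeGroup.of 0)⁻¹} : Set (FreeGroup (Fin 9))) ≃*
        Monoid.Coprod (Multiplicative (ℤ × ℤ)) (FreeGroup (Fin 4))) := by
  exact ⟨Stmt3Aux.theEquiv⟩
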